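/- Let (X,d,μ) be a metric measure space with doubling μ satisfying μ(B(c,r'))/μ(B(c,r)) ≲ (r'/r)^σ for some σ > 0, c ∈ X and all 0 < r' ≤ r ≤ 2 diam X. Let -σ < α ≤ 0 and w(x) = d(x,c)^α. Then w is an A_1 weight with respect to μ: for every ball B ⊂ X, ⨍_B w dμ ≤ C ess inf_B w. -/

import Mathlib

open MeasureTheory Metric Set ENNReal Filter

private lemma aux_le_essInf {Y : Type*} [MeasurableSpace Y] {ν : Measure Y} (hν : ν ≠ 0)
    {f : Y → ℝ} {b : ℝ} (h : ∀ᵐ x ∂ν, b ≤ f x) : b ≤ essInf f ν := by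
  have hne : (ae ν).NeBot := ae_neBot.2 hν
  have heq : essInf f ν = sSup {a : ℝ | ∀ᶠ x in ae ν, a ≤ f x} := Filter.liminf_eq
  rw [heq]
  refine le_csSup ?_ h
  by_contra hb
  have hall : ∀ M : ℝ, ∀ᶠ x in ae ν, M ≤ f x := by
    intro M
    rcases not_bddAbove_iff.1 hb M with ⟨a, haS, hMa⟩
    have haS' : ∀ᵐ x ∂ν, a ≤ f x := haS
    exact haS'.mono fun x hx => hMa.le.trans hx
  have h2 : ∀ᵐ x ∂ν, ∀ n : ℕ, (n : ℝ) ≤ f x := ae_all_iff.2 fun n => hall n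
  rcases h2.exists with ⟨x, hx⟩
  rcases exists_nat_gt (f x) with ⟨n, hn⟩
  exact absurd (hx n) (not_le.2 hn)

private lemma aux_transfer {Y : Type*} [MeasurableSpace Y] {μ : Measure Y} {s N : Set Y}
    {w g : Y → ℝ} (hg : Measurable g) (hwg : w =ᵐ[μ.restrict s] g) (hN : μ N = 0)
    {P : ℝ → Prop} (hPm : MeasurableSet {y : ℝ | ¬ P y})
    (hP : ∀ x ∈ s, x ∉ N → P (w x)) : ∀ᵐ x ∂μ.restrict s, P (g x) := by
  set F := toMeasurable (μ.restrict s) {x | w x ≠ g x} with hFdef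
  have hFm : MeasurableSet F := measurableSet_toMeasurable _ _
  have hF0 : μ (F ∩ s) = 0 := by
    have h1 : μ.restrict s F = μ (F ∩ s) := Measure.restrict_apply hFm
    rw [← h1, hFdef, measure_toMeasurable]
    exact ae_iff.1 hwg
  have hsub : {x | ¬ P (g x)} ∩ s ⊆ (F ∩ s) ∪ N := by
    rintro x ⟨hxP, hxs⟩
    by_cases hxN : x ∈ N
    · exact Or.inr hxN
    · refine Or.inl ⟨subset_toMeasurable _ _ ?_, hxs⟩
      intro hEq
      exact hxP (hEq ▸ hP x hxs hxN)
  rw [ae_iff]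
  have h1 : μ.restrict s {x | ¬ P (g x)} = μ ({x | ¬ P (g x)} ∩ s) :=
    Measure.restrict_apply (hg hPm)
  rw [h1]
  refine le_antisymm ?_ zero_le
  calc μ ({x | ¬ P (g x)} ∩ s) ≤ μ ((F ∩ s) ∪ N) := measure_mono hsub
    _ ≤ μ (F ∩ s) + μ N := measure_union_le _ _
    _ = 0 := by rw [hF0, hN, add_zero]

private lemma aux_setbound {Y : Type*} [MeasurableSpace Y] {μ : Measure Y} {s B : Set Y}
    {w g : Y → ℝ} (hg : Measurable g) (hwg : w =ᵐ[μ.restrict s] g) (t : ℝ)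
    (h : ∀ x, t < w x → x ∈ B) : μ.restrict s {x | t < g x} ≤ μ B := by
  set F := toMeasurable (μ.restrict s) {x | w x ≠ g x} with hFdef
  have hFm : MeasurableSet F := measurableSet_toMeasurable _ _
  have hF0 : μ (F ∩ s) = 0 := by
    have h1 : μ.restrict s F = μ (F ∩ s) := Measure.restrict_apply hFm
    rw [← h1, hFdef, measure_toMeasurable]
    exact ae_iff.1 hwg
  have hsub : {x | t < g x} ∩ s ⊆ (F ∩ s) ∪ B := by
    rintro x ⟨hxg, hxs⟩
    by_cases hEq : w x = g x
    · exact Or.inr (h x (by rw [hEq]; exact hxg))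
    · exact Or.inl ⟨subset_toMeasurable _ _ hEq, hxs⟩
  have hmeas : MeasurableSet {x | t < g x} := measurableSet_lt measurable_const hg
  rw [Measure.restrict_apply hmeas]
  calc μ ({x | t < g x} ∩ s) ≤ μ ((F ∩ s) ∪ B) := measure_mono hsub
    _ ≤ μ (F ∩ s) + μ B := measure_union_le _ _
    _ = μ B := by rw [hF0, zero_add]

set_option maxHeartbeats 4000000 in
/-- If `μ` is doubling and satisfies the power decay
`μ(B(c,r'))/μ(B(c,r)) ≲ (r'/r)^σ` for balls centered at `c`, and
`-σ < α ≤ 0`, then `w = d(·,c)^α` is a Muckenhoupt `A_1` weight: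
`⨍_B w dμ ≤ C' essinf_B w` for every ball `B ⊂ X`. -/
theorem power_weight_is_A1 {X : Type*} [MetricSpace X] [MeasurableSpace X]
    (μ : Measure X) (c : X)
    (hball : ∀ (x : X) (r : ℝ), 0 < r → 0 < μ (Metric.ball x r) ∧ μ (Metric.ball x r) < ⊤)
    (CD : ℝ) (hCD : 0 < CD)
    (hdoub : ∀ (x : X) (r : ℝ), 0 < r →
      μ (Metric.ball x (2 * r)) ≤ ENNReal.ofReal CD * μ (Metric.ball x r))
    (C σ : ℝ) (hC : 0 < C) (hσ : 0 < σ)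
    (hdecay : ∀ r' r : ℝ, 0 < r' → r' ≤ r →
      ENNReal.ofReal r ≤ 2 * EMetric.diam (Set.univ : Set X) →
      μ (Metric.ball c r') ≤ ENNReal.ofReal (C * (r' / r) ^ σ) * μ (Metric.ball c r))
    (α : ℝ) (hα1 : -σ < α) (hα2 : α ≤ 0) :
    ∃ C' : ℝ, 0 < C' ∧ ∀ (z : X) (r : ℝ), 0 < r →
      ⨍ x in Metric.ball z r, dist x c ^ α ∂μ ≤
        C' * essInf (fun x => dist x c ^ α) (μ.restrict (Metric.ball z r)) := by
  classical
  set D := EMetric.diam (Set.univ : Set X) with hD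
  -- CD ≥ 1
  have hCD1 : (1:ℝ) ≤ CD := by
    by_contra hlt
    push_neg at hlt
    obtain ⟨hb1, hb2⟩ := hball c 1 one_pos
    have h2 : μ (Metric.ball c 1) ≤ ENNReal.ofReal CD * μ (Metric.ball c 1) :=
      (measure_mono (ball_subset_ball (by norm_num))).trans (hdoub c 1 one_pos)
    have hfin : ENNReal.ofReal CD * μ (Metric.ball c 1) ≠ ⊤ :=
      ENNReal.mul_ne_top ENNReal.ofReal_ne_top hb2.ne
    have h3 : (μ (Metric.ball c 1)).toReal ≤ CD * (μ (Metric.ball c 1)).toReal := by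
      have := ENNReal.toReal_mono hfin h2
      rwa [ENNReal.toReal_mul, ENNReal.toReal_ofReal hCD.le] at this
    have hm : 0 < (μ (Metric.ball c 1)).toReal := ENNReal.toReal_pos hb1.ne' hb2.ne
    nlinarith
  have hσα : 0 < σ + α := by linarith
  set c₃ : ℝ := -α / (σ + α) with hc₃
  have hc₃nn : 0 ≤ c₃ := div_nonneg (neg_nonneg.2 hα2) hσα.le
  set K : ℝ := 1 + C * c₃ * CD ^ 3 with hK
  have hCcnn : 0 ≤ C * c₃ * CD ^ 3 :=
    mul_nonneg (mul_nonneg hC.le hc₃nn) (pow_nonneg hCD.le 3)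
  have hK1 : 1 ≤ K := by rw [hK]; linarith
  have h3α : (1:ℝ) ≤ (3:ℝ) ^ (-α) := by
    calc (1:ℝ) = (3:ℝ) ^ (0:ℝ) := (Real.rpow_zero 3).symm
    _ ≤ (3:ℝ) ^ (-α) := Real.rpow_le_rpow_of_exponent_le (by norm_num) (by linarith)
  set C' : ℝ := max ((3:ℝ) ^ (-α)) K with hC'
  have hC'1 : 1 ≤ C' := le_trans h3α (le_max_left _ _)
  have hC'pos : 0 < C' := lt_of_lt_of_le one_pos hC'1
  -- the center is null at any admissible scale
  have hc0 : ∀ R : ℝ, 0 < R → ENNReal.ofReal R ≤ 2 * D → μ {c} = 0 := by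
    intro R hR hRD
    have hMfin := (hball c R hR).2
    have hstep : ∀ n : ℕ, μ {c} ≤ ENNReal.ofReal (C * ((2:ℝ) ^ (-σ)) ^ n) * μ (Metric.ball c R) := by
      intro n
      have hrn : (0:ℝ) < (1/2 : ℝ) ^ n * R := by positivity
      have hle : (1/2 : ℝ) ^ n * R ≤ R := by
        have h1 : ((1:ℝ)/2) ^ n ≤ 1 := pow_le_one₀ (by norm_num) (by norm_num)
        nlinarith
      have hdec := hdecay ((1/2:ℝ)^n * R) R hrn hle hRD
      have heq : C * (((1/2:ℝ)^n * R) / R) ^ σ = C * ((2:ℝ)^(-σ))^n := by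
        rw [mul_div_assoc, div_self hR.ne', mul_one]
        congr 1
        have h2 : ((1:ℝ)/2) ^ (n:ℕ) = ((1:ℝ)/2) ^ ((n:ℕ):ℝ) := (Real.rpow_natCast _ n).symm
        rw [h2, ← Real.rpow_mul (by norm_num : (0:ℝ) ≤ 1/2), mul_comm ((n:ℕ):ℝ) σ,
          Real.rpow_mul (by norm_num : (0:ℝ) ≤ 1/2), Real.rpow_natCast]
        congr 1
        rw [one_div, Real.inv_rpow (by norm_num : (0:ℝ) ≤ 2),
          ← Real.rpow_neg (by norm_num : (0:ℝ) ≤ 2)]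
      calc μ {c} ≤ μ (Metric.ball c ((1/2:ℝ)^n * R)) := by
            refine measure_mono ?_
            intro x hx
            rw [mem_singleton_iff] at hx
            subst hx
            exact mem_ball_self hrn
        _ ≤ ENNReal.ofReal (C * (((1/2:ℝ)^n * R) / R) ^ σ) * μ (Metric.ball c R) := hdec
        _ = _ := by rw [heq]
    have hq1 : (2:ℝ) ^ (-σ) < 1 :=
      Real.rpow_lt_one_of_one_lt_of_neg (by norm_num) (by linarith)
    have hq0 : (0:ℝ) ≤ (2:ℝ)^(-σ) := Real.rpow_nonneg (by norm_num) _
    have htendR : Tendsto (fun n : ℕ => C * ((2:ℝ)^(-σ))^n) atTop (nhds 0) := by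
      have h0 := tendsto_pow_atTop_nhds_zero_of_lt_one hq0 hq1
      simpa using h0.const_mul C
    have htend : Tendsto (fun n : ℕ => ENNReal.ofReal (C * ((2:ℝ)^(-σ))^n) * μ (Metric.ball c R))
        atTop (nhds 0) := by
      have h1 : Tendsto (fun n : ℕ => ENNReal.ofReal (C * ((2:ℝ)^(-σ))^n)) atTop (nhds 0) := by
        have := ENNReal.tendsto_ofReal htendR
        simpa using this
      have := ENNReal.Tendsto.mul_const h1 (Or.inr hMfin.ne)
      simpa using this
    have hle0 : μ {c} ≤ 0 := ge_of_tendsto' htend hstep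
    exact le_antisymm hle0 zero_le
  refine ⟨C', hC'pos, ?_⟩
  intro z r hr
  set B := Metric.ball z r with hB
  set ν := μ.restrict B with hν
  set w : X → ℝ := fun x => dist x c ^ α with hwdef
  obtain ⟨hBpos, hBfin⟩ := hball z r hr
  have hν0 : ν ≠ 0 := by
    rw [hν, Ne, Measure.restrict_eq_zero]; exact hBpos.ne'
  haveI : IsFiniteMeasure ν := ⟨by rw [hν, Measure.restrict_apply_univ]; exact hBfin⟩
  have hw0 : ∀ x, 0 ≤ w x := fun x => Real.rpow_nonneg dist_nonneg _
  have hessnn : 0 ≤ essInf w ν := aux_le_essInf hν0 (Eventually.of_forall hw0)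
  have hμB : (0:ℝ) < (μ B).toReal := ENNReal.toReal_pos hBpos.ne' hBfin.ne
  rcases eq_or_lt_of_le hα2 with hα0 | hαneg
  · -- α = 0 : the weight is constant 1
    have hone : w = fun _ : X => (1:ℝ) := by
      funext x
      show dist x c ^ α = 1
      rw [hα0, Real.rpow_zero]
    rw [hone]
    rw [setAverage_const hBpos.ne' hBfin.ne, essInf_const _ hν0]
    linarith
  · -- α < 0
    by_cases hint : Integrable w ν
    swap
    · -- not integrable : the average is zero
      have hzero : ⨍ x in B, w x ∂μ = 0 := by
        rw [setAverage_eq, integral_undef hint, smul_zero]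
      rw [hzero]
      exact mul_nonneg hC'pos.le hessnn
    · have ham : AEMeasurable w ν := hint.aemeasurable
      set g : X → ℝ := ham.mk w with hgdef
      have hgm : Measurable g := ham.measurable_mk
      have hwg : w =ᵐ[ν] g := ham.ae_eq_mk
      have hgint : Integrable g ν := hint.congr hwg
      have hess_eq : essInf w ν = essInf g ν := essInf_congr_ae hwg
      have havg : ⨍ x in B, w x ∂μ = ⨍ x in B, g x ∂μ := average_congr hwg
      have hgnn : ∀ᵐ x ∂ν, 0 ≤ g x := by
        refine aux_transfer hgm hwg (measure_empty (μ := μ)) ?_ ?_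
        · have he : {y : ℝ | ¬ (0:ℝ) ≤ y} = Iio 0 := by
            ext y; simp [not_le]
          rw [he]; exact measurableSet_Iio
        · intro x _ _; exact hw0 x
      -- the key estimate for the near case
      have key : ∀ R : ℝ, 0 < R → ENNReal.ofReal R ≤ 2 * D →
          (∀ x ∈ B, dist x c ≤ R) →
          μ (Metric.ball c R) ≤ ENNReal.ofReal (CD ^ 3) * μ B →
          ⨍ x in B, w x ∂μ ≤ C' * essInf w ν := by
        intro R hR hRD hsub hcomp
        have hcc : μ {c} = 0 := hc0 R hR hRD
        set T := R ^ α with hT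
        have hTpos : 0 < T := Real.rpow_pos_of_pos hR α
        have hlbg : ∀ᵐ x ∂ν, T ≤ g x := by
          refine aux_transfer hgm hwg hcc ?_ ?_
          · have he : {y : ℝ | ¬ T ≤ y} = Iio T := by ext y; simp [not_le]
            rw [he]; exact measurableSet_Iio
          · intro x hx hxc
            have hdp : 0 < dist x c := dist_pos.2 (by simpa using hxc)
            exact Real.rpow_le_rpow_of_nonpos hdp (hsub x hx) hα2
        have hessT : T ≤ essInf g ν := aux_le_essInf hν0 hlbg
        set p := σ / α with hp
        have hplt : p < -1 := by
          rw [hp, div_lt_iff_of_neg hαneg]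
          linarith
        have hlayer : ∫⁻ x, ENNReal.ofReal (g x) ∂ν = ∫⁻ t in Ioi (0:ℝ), ν {a | t < g a} :=
          lintegral_eq_lintegral_meas_lt ν hgnn hgm.aemeasurable
        have hover : ∀ t : ℝ, t ∈ Ioi T →
            ν {a | t < g a} ≤ ENNReal.ofReal ((C / R^σ) * t^p) * μ (Metric.ball c R) := by
          intro t ht
          rw [mem_Ioi] at ht
          have ht0 : 0 < t := hTpos.trans ht
          set ρ := t ^ α⁻¹ with hρ
          have hρpos : 0 < ρ := Real.rpow_pos_of_pos ht0 _
          have hρle : ρ ≤ R := by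
            have h1 : t ^ α⁻¹ < T ^ α⁻¹ :=
              Real.rpow_lt_rpow_of_neg hTpos ht (inv_lt_zero.2 hαneg)
            have h2 : T ^ α⁻¹ = R := by
              rw [hT]; exact Real.rpow_rpow_inv hR.le (ne_of_lt hαneg)
            rw [hρ]; rw [h2] at h1; exact h1.le
          have hsubset : ∀ x : X, t < w x → x ∈ Metric.ball c ρ := by
            intro x hxw
            have hdp : 0 < dist x c := by
              by_contra hnd
              push_neg at hnd
              have hd0 : dist x c = 0 := le_antisymm hnd dist_nonneg
              have : w x = 0 := by
                simp only [hwdef, hd0, Real.zero_rpow (ne_of_lt hαneg)]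
              rw [this] at hxw
              linarith
            rw [mem_ball]
            have h3 : (dist x c ^ α) ^ α⁻¹ < t ^ α⁻¹ := by
              refine Real.rpow_lt_rpow_of_neg ht0 ?_ (inv_lt_zero.2 hαneg)
              simpa only [hwdef] using hxw
            rwa [Real.rpow_rpow_inv dist_nonneg (ne_of_lt hαneg)] at h3
          calc ν {a | t < g a} ≤ μ (Metric.ball c ρ) := aux_setbound hgm hwg t hsubset
            _ ≤ ENNReal.ofReal (C * (ρ/R)^σ) * μ (Metric.ball c R) := hdecay ρ R hρpos hρle hRD
            _ = ENNReal.ofReal ((C / R^σ) * t^p) * μ (Metric.ball c R) := by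
                congr 2
                rw [hρ, Real.div_rpow (Real.rpow_nonneg ht0.le _) hR.le,
                  ← Real.rpow_mul ht0.le]
                rw [show α⁻¹ * σ = p by rw [hp]; field_simp]
                ring
        have hIoi : Ioi (0:ℝ) = Ioc 0 T ∪ Ioi T := (Ioc_union_Ioi_eq_Ioi hTpos.le).symm
        have hsplit : ∫⁻ t in Ioi (0:ℝ), ν {a | t < g a} =
            (∫⁻ t in Ioc (0:ℝ) T, ν {a | t < g a}) + ∫⁻ t in Ioi T, ν {a | t < g a} := by
          rw [hIoi, lintegral_union measurableSet_Ioi Ioc_disjoint_Ioi_same]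
        have h1 : ∫⁻ t in Ioc (0:ℝ) T, ν {a | t < g a} ≤ ENNReal.ofReal T * μ B := by
          calc ∫⁻ t in Ioc (0:ℝ) T, ν {a | t < g a} ≤ ∫⁻ _t in Ioc (0:ℝ) T, μ B := by
                refine lintegral_mono fun t => ?_
                calc ν {a | t < g a} ≤ ν univ := measure_mono (subset_univ _)
                  _ = μ B := by rw [hν, Measure.restrict_apply_univ]
            _ = μ B * volume (Ioc (0:ℝ) T) := setLIntegral_const _ _
            _ = ENNReal.ofReal T * μ B := by
                rw [Real.volume_Ioc, sub_zero, mul_comm]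
        have hfi : IntegrableOn (fun t : ℝ => (C / R^σ) * t^p) (Ioi T) volume :=
          (integrableOn_Ioi_rpow_of_lt hplt hTpos).const_mul _
        have hnn : 0 ≤ᵐ[volume.restrict (Ioi T)] fun t : ℝ => (C / R^σ) * t^p := by
          filter_upwards [ae_restrict_mem measurableSet_Ioi] with t ht
          have ht0 : (0:ℝ) ≤ t := (hTpos.trans ht).le
          have : (0:ℝ) ≤ C / R ^ σ := div_nonneg hC.le (Real.rpow_nonneg hR.le _)
          positivity
        have hVlt : ∫⁻ t in Ioi T, ENNReal.ofReal ((C / R^σ) * t^p) =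
            ENNReal.ofReal ((C/R^σ) * (-T^(p+1)/(p+1))) := by
          rw [← ofReal_integral_eq_lintegral_ofReal hfi hnn]
          congr 1
          rw [MeasureTheory.integral_const_mul, integral_Ioi_rpow_of_lt hplt hTpos]
        have h2 : ∫⁻ t in Ioi T, ν {a | t < g a} ≤
            ENNReal.ofReal (C * c₃ * T) * μ (Metric.ball c R) := by
          have hmeas2 : Measurable fun t : ℝ =>
              ENNReal.ofReal ((C / R^σ) * t^p) * μ (Metric.ball c R) :=
            ((measurable_const.mul (measurable_id.pow measurable_const)).ennreal_ofReal).mul_const _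
          calc ∫⁻ t in Ioi T, ν {a | t < g a}
              ≤ ∫⁻ t in Ioi T, ENNReal.ofReal ((C / R^σ) * t^p) * μ (Metric.ball c R) :=
                setLIntegral_mono hmeas2 hover
            _ = (∫⁻ t in Ioi T, ENNReal.ofReal ((C / R^σ) * t^p)) * μ (Metric.ball c R) :=
                lintegral_mul_const' _ _ (hball c R hR).2.ne
            _ = ENNReal.ofReal ((C/R^σ) * (-T^(p+1)/(p+1))) * μ (Metric.ball c R) := by
                rw [hVlt]
            _ = ENNReal.ofReal (C * c₃ * T) * μ (Metric.ball c R) := by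
                congr 2
                have e1 : T^(p+1) = R^(σ+α) := by
                  rw [hT, ← Real.rpow_mul hR.le]
                  congr 1
                  have hα0' : α ≠ 0 := ne_of_lt hαneg
                  rw [hp]
                  field_simp
                rw [e1, hT, Real.rpow_add hR σ α, hc₃, hp]
                have hRσ : R^σ ≠ 0 := (Real.rpow_pos_of_pos hR σ).ne'
                have hα0' : α ≠ 0 := ne_of_lt hαneg
                have hσα' : σ + α ≠ 0 := hσα.ne'
                field_simp
        have htot : ∫⁻ x, ENNReal.ofReal (g x) ∂ν ≤ ENNReal.ofReal (K * T) * μ B := by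
          rw [hlayer, hsplit]
          have hCT : (0:ℝ) ≤ C * c₃ * T := mul_nonneg (mul_nonneg hC.le hc₃nn) hTpos.le
          calc (∫⁻ t in Ioc (0:ℝ) T, ν {a | t < g a}) + ∫⁻ t in Ioi T, ν {a | t < g a}
              ≤ ENNReal.ofReal T * μ B + ENNReal.ofReal (C * c₃ * T) * μ (Metric.ball c R) :=
                add_le_add h1 h2
            _ ≤ ENNReal.ofReal T * μ B +
                ENNReal.ofReal (C * c₃ * T) * (ENNReal.ofReal (CD^3) * μ B) :=
                add_le_add le_rfl (mul_le_mul_right hcomp _)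
            _ = ENNReal.ofReal (K * T) * μ B := by
                rw [← mul_assoc, ← ENNReal.ofReal_mul hCT, ← add_mul,
                  ← ENNReal.ofReal_add hTpos.le
                    (mul_nonneg hCT (pow_nonneg hCD.le 3))]
                congr 2
                rw [hK]; ring
        have hfin' : ENNReal.ofReal (K*T) * μ B ≠ ⊤ :=
          ENNReal.mul_ne_top ENNReal.ofReal_ne_top hBfin.ne
        have hKT : (0:ℝ) ≤ K * T := mul_nonneg (by linarith) hTpos.le
        have hInt_eq : ∫ x in B, g x ∂μ = (∫⁻ x, ENNReal.ofReal (g x) ∂ν).toReal :=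
          integral_eq_lintegral_of_nonneg_ae hgnn hgint.aestronglyMeasurable
        have hIle : ∫ x in B, g x ∂μ ≤ K * T * (μ B).toReal := by
          rw [hInt_eq]
          calc (∫⁻ x, ENNReal.ofReal (g x) ∂ν).toReal
              ≤ (ENNReal.ofReal (K*T) * μ B).toReal := ENNReal.toReal_mono hfin' htot
            _ = K * T * (μ B).toReal := by
                rw [ENNReal.toReal_mul, ENNReal.toReal_ofReal hKT]
        rw [havg, hess_eq, setAverage_eq]
        calc (μ B).toReal⁻¹ • ∫ x in B, g x ∂μ
            ≤ (μ B).toReal⁻¹ * (K * T * (μ B).toReal) := by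
              rw [smul_eq_mul]
              exact mul_le_mul_of_nonneg_left hIle (inv_nonneg.2 hμB.le)
          _ = K * T := by
              rw [mul_comm ((μ B).toReal)⁻¹, mul_assoc, mul_inv_cancel₀ hμB.ne', mul_one]
          _ ≤ K * essInf g ν := mul_le_mul_of_nonneg_left hessT (by linarith)
          _ ≤ C' * essInf g ν :=
              mul_le_mul_of_nonneg_right (le_max_right _ _) (le_trans hTpos.le hessT)
      rcases le_or_gt (2*r) (dist z c) with hfar | hnear
      · -- far case
        have hd0 : 0 < dist z c := lt_of_lt_of_le (by linarith) hfar
        have hbound : ∀ x ∈ B, dist z c / 2 ≤ dist x c ∧ dist x c ≤ (3/2) * dist z c := by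
          intro x hx
          have hxz : dist x z < r := mem_ball.1 hx
          constructor
          · have h := dist_triangle z x c
            rw [dist_comm z x] at h
            linarith
          · have h := dist_triangle x z c
            linarith
        set M := (dist z c / 2) ^ α with hM
        set m := ((3/2) * dist z c) ^ α with hm
        have hub : ∀ᵐ x ∂ν, g x ≤ M := by
          refine aux_transfer (P := fun y => y ≤ M) hgm hwg (measure_empty (μ := μ)) ?_ ?_
          · have he : {y : ℝ | ¬ y ≤ M} = Ioi M := by ext y; simp [not_le]
            rw [he]; exact measurableSet_Ioi
          · intro x hx _
            exact Real.rpow_le_rpow_of_nonpos (by linarith) (hbound x hx).1 hα2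
        have hlbg : ∀ᵐ x ∂ν, m ≤ g x := by
          refine aux_transfer hgm hwg (measure_empty (μ := μ)) ?_ ?_
          · have he : {y : ℝ | ¬ m ≤ y} = Iio m := by ext y; simp [not_le]
            rw [he]; exact measurableSet_Iio
          · intro x hx _
            exact Real.rpow_le_rpow_of_nonpos
              (lt_of_lt_of_le (by linarith) (hbound x hx).1) (hbound x hx).2 hα2
        have hmpos : 0 < m := Real.rpow_pos_of_pos (by linarith) α
        have hessm : m ≤ essInf g ν := aux_le_essInf hν0 hlbg
        have havgM : ⨍ x in B, g x ∂μ ≤ M := by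
          rw [setAverage_eq]
          have hint2 : ∫ x in B, g x ∂μ ≤ M * (μ B).toReal := by
            have h := integral_mono_ae hgint (integrable_const M) hub
            rw [integral_const] at h
            rw [Measure.real, Measure.restrict_apply_univ] at h
            rw [smul_eq_mul, mul_comm] at h
            exact h
          calc (μ B).toReal⁻¹ • ∫ x in B, g x ∂μ
              ≤ (μ B).toReal⁻¹ * (M * (μ B).toReal) := by
                rw [smul_eq_mul]
                exact mul_le_mul_of_nonneg_left hint2 (inv_nonneg.2 hμB.le)
            _ = M := by
                rw [mul_comm ((μ B).toReal)⁻¹, mul_assoc, mul_inv_cancel₀ hμB.ne', mul_one]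
        have hMm : M = (3:ℝ)^(-α) * m := by
          rw [hM, hm, Real.rpow_neg (by norm_num : (0:ℝ) ≤ 3)]
          have h1 : dist z c / 2 = ((3/2) * dist z c) / 3 := by ring
          rw [h1, Real.div_rpow (by linarith : (0:ℝ) ≤ (3/2) * dist z c)
            (by norm_num : (0:ℝ) ≤ 3), div_eq_mul_inv, mul_comm]
        rw [havg, hess_eq]
        calc ⨍ x in B, g x ∂μ ≤ M := havgM
          _ = (3:ℝ)^(-α) * m := hMm
          _ ≤ (3:ℝ)^(-α) * essInf g ν :=
              mul_le_mul_of_nonneg_left hessm (Real.rpow_nonneg (by norm_num) _)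
          _ ≤ C' * essInf g ν :=
              mul_le_mul_of_nonneg_right (le_max_left _ _) (le_trans hmpos.le hessm)
      · -- near case
        by_cases hRle : ENNReal.ofReal (3*r) ≤ 2 * D
        · refine key (3*r) (by linarith) hRle ?_ ?_
          · intro x hx
            have h1 : dist x z < r := mem_ball.1 hx
            have h := dist_triangle x z c
            linarith
          · have hsub5 : Metric.ball c (3*r) ⊆ Metric.ball z (2*(2*(2*r))) := by
              intro x hx
              rw [mem_ball] at hx ⊢
              have h := dist_triangle x c z
              have hzc : dist c z < 2*r := by rw [dist_comm]; exact hnear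
              linarith
            calc μ (Metric.ball c (3*r)) ≤ μ (Metric.ball z (2*(2*(2*r)))) := measure_mono hsub5
              _ ≤ ENNReal.ofReal CD * μ (Metric.ball z (2*(2*r))) :=
                  hdoub z (2*(2*r)) (by linarith)
              _ ≤ ENNReal.ofReal CD * (ENNReal.ofReal CD * μ (Metric.ball z (2*r))) :=
                  mul_le_mul_right (hdoub z (2*r) (by linarith)) _
              _ ≤ ENNReal.ofReal CD * (ENNReal.ofReal CD * (ENNReal.ofReal CD * μ B)) := by
                  refine mul_le_mul_right (mul_le_mul_right ?_ _) _
                  rw [hB]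
                  exact hdoub z r hr
              _ = ENNReal.ofReal (CD^3) * μ B := by
                  rw [← mul_assoc, ← mul_assoc, ← ENNReal.ofReal_mul hCD.le,
                    ← ENNReal.ofReal_mul (mul_nonneg hCD.le hCD.le)]
                  congr 2
                  ring
        · have hDtop : D ≠ ⊤ := by
            intro h
            apply hRle
            rw [h]
            simp
          rcases eq_or_ne D 0 with hD0 | hDne
          · -- degenerate: the space has a single point
            have hdist0 : ∀ x : X, dist x c = 0 := by
              intro x
              have h1 : edist x c ≤ D := by
                rw [hD]; exact EMetric.edist_le_diam_of_mem (mem_univ x) (mem_univ c)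
              rw [hD0] at h1
              have h2 : edist x c = 0 := le_antisymm h1 zero_le
              rw [dist_edist, h2, ENNReal.toReal_zero]
            have hzero : w = fun _ : X => (0:ℝ) := by
              funext x
              simp only [hwdef, hdist0 x, Real.zero_rpow (ne_of_lt hαneg)]
            rw [hzero, setAverage_const hBpos.ne' hBfin.ne, essInf_const _ hν0, mul_zero]
          · have hDt : 0 < D.toReal := ENNReal.toReal_pos hDne hDtop
            have hdlt : 2 * D.toReal < 3 * r := by
              have h1 : 2 * D < ENNReal.ofReal (3*r) := not_le.1 hRle
              have h2 : (2*D).toReal < (ENNReal.ofReal (3*r)).toReal := by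
                refine (ENNReal.toReal_lt_toReal ?_ ENNReal.ofReal_ne_top).2 h1
                exact ENNReal.mul_ne_top (by simp) hDtop
              rwa [ENNReal.toReal_mul, ENNReal.toReal_ofNat,
                ENNReal.toReal_ofReal (by linarith)] at h2
            have hdub : ∀ x : X, dist x c ≤ D.toReal := by
              intro x
              have h1 : edist x c ≤ D := by
                rw [hD]; exact EMetric.edist_le_diam_of_mem (mem_univ x) (mem_univ c)
              rw [dist_edist]
              exact ENNReal.toReal_mono hDtop h1
            have hRD2 : ENNReal.ofReal (2 * D.toReal) ≤ 2 * D := by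
              rw [ENNReal.ofReal_mul (by norm_num : (0:ℝ) ≤ 2), ENNReal.ofReal_ofNat,
                ENNReal.ofReal_toReal hDtop]
            refine key (2 * D.toReal) (by linarith) hRD2 ?_ ?_
            · intro x _
              have := hdub x
              linarith
            · have hsub2 : Metric.ball c (2*D.toReal) ⊆ Metric.ball z (2*r) := by
                intro x _
                rw [mem_ball]
                have h1 : dist x z ≤ D.toReal := by
                  have h2 : edist x z ≤ D := by
                    rw [hD]; exact EMetric.edist_le_diam_of_mem (mem_univ x) (mem_univ z)
                  rw [dist_edist]
                  exact ENNReal.toReal_mono hDtop h2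
                linarith
              calc μ (Metric.ball c (2*D.toReal)) ≤ μ (Metric.ball z (2*r)) :=
                  measure_mono hsub2
                _ ≤ ENNReal.ofReal CD * μ B := by rw [hB]; exact hdoub z r hr
                _ ≤ ENNReal.ofReal (CD^3) * μ B := by
                    refine mul_le_mul_left (ENNReal.ofReal_le_ofReal ?_) _
                    nlinarith [mul_nonneg (mul_nonneg hCD.le (sub_nonneg.2 hCD1))
                      (by linarith : (0:ℝ) ≤ CD + 1)]
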